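/- Let R be a binary relation on the subgroups of a finite group G that refines inclusion. Define R₁ as the closure of R under conjugation, R₂ as the closure of R₁ under restriction (adding (L ∩ K, L) for all L ⊆ H whenever (K,H) ∈ R₁), and R₃ as the reflexive–transitive closure of R₂. Then R₃ is the smallest G-transfer system containing R. -/
import Mathlib

open Pointwise

/-- Conjugate of a subgroup: `conjS g H = g H g⁻¹`. -/
def conjS {G : Type} [Group G] (g : G) (H : Subgroup G) : Subgroup G :=
  MulAut.conj g • H

/-- A `G`-transfer system: a partial order on the subgroups of `G` refining
inclusion, closed under conjugation and restriction. -/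
structure TransferSystem (G : Type) [Group G] where
  rel : Subgroup G → Subgroup G → Prop
  le_of_rel : ∀ K H : Subgroup G, rel K H → K ≤ H
  refl : ∀ H : Subgroup G, rel H H
  antisymm : ∀ K H : Subgroup G, rel K H → rel H K → K = H
  trans : ∀ J K H : Subgroup G, rel J K → rel K H → rel J H
  conj : ∀ (K H : Subgroup G) (g : G), rel K H → rel (conjS g K) (conjS g H)
  res : ∀ K H L : Subgroup G, rel K H → L ≤ H → rel (K ⊓ L) L

/-- Closure of a relation on subgroups under conjugation. -/
def conjClosure {G : Type} [Group G] (R : Subgroup G → Subgroup G → Prop) :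
    Subgroup G → Subgroup G → Prop :=
  fun K' H' => ∃ (K H : Subgroup G) (g : G), R K H ∧ K' = conjS g K ∧ H' = conjS g H

/-- Closure of a relation on subgroups under restriction: we add the pair
`(L ⊓ K, L)` for every `L ≤ H` whenever `(K, H)` is related. -/
def resClosure {G : Type} [Group G] (R : Subgroup G → Subgroup G → Prop) :
    Subgroup G → Subgroup G → Prop :=
  fun K' H' => ∃ K H : Subgroup G, R K H ∧ H' ≤ H ∧ K' = H' ⊓ K

lemma conjS_mono {G : Type} [Group G] (g : G) {A B : Subgroup G} (h : A ≤ B) :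
    conjS g A ≤ conjS g B :=
  Subgroup.pointwise_smul_le_pointwise_smul_iff.2 h

lemma conjS_inf {G : Type} [Group G] (g : G) (A B : Subgroup G) :
    conjS g (A ⊓ B) = conjS g A ⊓ conjS g B :=
  Subgroup.smul_inf _ A B

lemma conjS_conjS {G : Type} [Group G] (g h : G) (A : Subgroup G) :
    conjS g (conjS h A) = conjS (g * h) A := by
  simp [conjS, smul_smul, map_mul]

section
variable {G : Type} [Group G] (R : Subgroup G → Subgroup G → Prop)

lemma conjClosure_conj {K H : Subgroup G} (g : G) (h : conjClosure R K H) :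
    conjClosure R (conjS g K) (conjS g H) := by
  obtain ⟨K₀, H₀, g₀, hr, rfl, rfl⟩ := h
  exact ⟨K₀, H₀, g * g₀, hr, conjS_conjS .., conjS_conjS ..⟩

variable (hR : ∀ K H, R K H → K ≤ H)
include hR

lemma conjClosure_le {K H : Subgroup G} (h : conjClosure R K H) : K ≤ H := by
  obtain ⟨K₀, H₀, g₀, hr, rfl, rfl⟩ := h
  exact conjS_mono _ (hR _ _ hr)

end

section
variable {G : Type} [Group G] {R : Subgroup G → Subgroup G → Prop}

-- abbreviation for the full closure
local notation "R₂" => resClosure (conjClosure R)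
local notation "R₃" => Relation.ReflTransGen (resClosure (conjClosure R))

lemma r2_le {K H : Subgroup G} (h : R₂ K H) : K ≤ H := by
  obtain ⟨K₀, H₀, _, _, rfl⟩ := h; exact inf_le_left

lemma r3_le {K H : Subgroup G} (h : R₃ K H) : K ≤ H := by
  induction h with
  | refl => exact le_rfl
  | tail _ hs ih => exact le_trans ih (r2_le hs)

lemma r2_conj {K H : Subgroup G} (g : G) (h : R₂ K H) :
    R₂ (conjS g K) (conjS g H) := by
  obtain ⟨K₀, H₀, hr, hle, rfl⟩ := h
  exact ⟨conjS g K₀, conjS g H₀, conjClosure_conj R g hr, conjS_mono g hle,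
    conjS_inf g H K₀⟩

lemma r3_conj {K H : Subgroup G} (g : G) (h : R₃ K H) :
    R₃ (conjS g K) (conjS g H) := by
  induction h with
  | refl => exact Relation.ReflTransGen.refl
  | tail _ hs ih => exact ih.tail (r2_conj g hs)

lemma r2_res {K H L : Subgroup G} (h : R₂ K H) (hL : L ≤ H) :
    R₂ (K ⊓ L) L := by
  obtain ⟨K₀, H₀, hr, hle, rfl⟩ := h
  refine ⟨K₀, H₀, hr, hL.trans hle, ?_⟩
  rw [inf_comm (H ⊓ K₀) L, ← inf_assoc, inf_of_le_left hL]

lemma r3_res {K H : Subgroup G} (h : R₃ K H) :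
    ∀ L : Subgroup G, L ≤ H → R₃ (K ⊓ L) L := by
  induction h with
  | refl => intro L hL; rw [inf_of_le_right hL]
  | @tail M H _ hs ih =>
      intro L hL
      have h1 : R₃ (K ⊓ (M ⊓ L)) (M ⊓ L) := ih (M ⊓ L) inf_le_left
      have h2 : R₂ (M ⊓ L) L := r2_res hs hL
      have hKM : K ≤ M := r3_le (by assumption)
      have : K ⊓ (M ⊓ L) = K ⊓ L := by
        rw [← inf_assoc, inf_of_le_left hKM]
      rw [this] at h1
      exact h1.tail h2

end

/-- Let `R` be a binary relation on the subgroups of a finite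
group `G` refining inclusion.  Let `R₁` be the closure of `R` under
conjugation, `R₂` the closure of `R₁` under restriction, and `R₃` the
reflexive–transitive closure of `R₂`.  Then `R₃` is the smallest `G`-transfer
system containing `R`. -/
theorem stmt6 {G : Type} [Group G] [Finite G]
    (R : Subgroup G → Subgroup G → Prop) (hR : ∀ K H, R K H → K ≤ H) :
    ∃ T : TransferSystem G,
      (∀ K H, T.rel K H ↔ Relation.ReflTransGen (resClosure (conjClosure R)) K H) ∧
      (∀ K H, R K H → T.rel K H) ∧
      (∀ S : TransferSystem G, (∀ K H, R K H → S.rel K H) →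
        ∀ K H, T.rel K H → S.rel K H) := by
  refine ⟨{
    rel := Relation.ReflTransGen (resClosure (conjClosure R))
    le_of_rel := fun K H h => r3_le h
    refl := fun H => Relation.ReflTransGen.refl
    antisymm := fun K H h h' => le_antisymm (r3_le h) (r3_le h')
    trans := fun J K H h h' => h.trans h'
    conj := fun K H g h => r3_conj g h
    res := fun K H L h hL => r3_res h L hL }, fun K H => Iff.rfl, ?_, ?_⟩
  · intro K H h
    exact Relation.ReflTransGen.single
      ⟨K, H, ⟨K, H, 1, h, by simp [conjS], by simp [conjS]⟩, le_rfl,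
        (inf_of_le_right (hR K H h)).symm⟩
  · intro S hS K H h
    induction h with
    | refl => exact S.refl _
    | tail _ hs ih =>
        refine S.trans _ _ _ ih ?_
        obtain ⟨K₀, H₀, ⟨K₁, H₁, g, hr, rfl, rfl⟩, hle, rfl⟩ := hs
        have := S.conj _ _ g (hS _ _ hr)
        have := S.res _ _ _ this hle
        rwa [inf_comm] at this
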